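/- arXiv:1908.00461 — 2 statements merged into one kernel-verified Lean document; each statement's English description precedes it below -/
import Mathlib

section
/- Assume σ : ℝ → [−1,1] is differentiable with |σ'| ≤ σ'_max. Let Σ ∈ ℝ^{n×n} be symmetric and set L_Z := sqrt(1 + ‖h(Σ)‖²). For parameters (A,b,C,d) and (Ā,b̄,C̄,d̄) with A, Ā ∈ ℝ^{ℓ×r}, b, b̄ ∈ ℝ^ℓ, C, C̄ ∈ ℝ^{nk×ℓ}, d, d̄ ∈ ℝ^{nk}, set X := C σ̃(A h(Σ)+b) + d and X̄ := C̄ σ̃(Ā h(Σ)+b̄) + d̄. Then for every 1 ≤ ν ≤ nk, (X_ν − X̄_ν)² ≤ ( (‖C_{ν,:}‖ σ'_max L_Z)² + ℓ + 1 ) · ( ‖A − Ā‖_F² + ‖b − b̄‖² + ‖C_{ν,:} − C̄_{ν,:}‖² + (d_ν − d̄_ν)² ). -/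
open scoped BigOperators

/-- Index type for the upper-triangular entries of an `n × n` matrix
(a set of cardinality `n (n + 1) / 2`). -/
abbrev UIdx (n : ℕ) : Type := {p : Fin n × Fin n // p.1 ≤ p.2}

/-- The operator `h` sending a symmetric matrix to the vector of
its upper-triangular entries. -/
def hv {n : ℕ} (S : Matrix (Fin n) (Fin n) ℝ) : UIdx n → ℝ :=
  fun p => S p.1.1 p.1.2

/-- Flattening index: entry `(i, s)` of an `n × k` matrix corresponds to
coordinate `i * k + s` of its row-by-row vectorization (the inverse of `g`). -/
def fidx {n k : ℕ} (i : Fin n) (s : Fin k) : Fin (n * k) :=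
  ⟨i.1 * k + s.1, by
    calc i.1 * k + s.1 < i.1 * k + k := Nat.add_lt_add_left s.2 _
      _ = (i.1 + 1) * k := by ring
      _ ≤ n * k := Nat.mul_le_mul (Nat.succ_le_of_lt i.2) (Nat.le_refl k)⟩

/-- `Z = A h(Σ) + b`. -/
noncomputable def Zv {n ℓ : ℕ} (S : Matrix (Fin n) (Fin n) ℝ)
    (A : Matrix (Fin ℓ) (UIdx n) ℝ) (b : Fin ℓ → ℝ) : Fin ℓ → ℝ :=
  fun i => A.mulVec (hv S) i + b i

/-- `X = C σ̃(Z) + d`. -/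
noncomputable def Xv {n k ℓ : ℕ} (σ : ℝ → ℝ) (S : Matrix (Fin n) (Fin n) ℝ)
    (A : Matrix (Fin ℓ) (UIdx n) ℝ) (b : Fin ℓ → ℝ)
    (C : Matrix (Fin (n * k)) (Fin ℓ) ℝ) (d : Fin (n * k) → ℝ) :
    Fin (n * k) → ℝ :=
  fun ν => C.mulVec (fun i => σ (Zv S A b i)) ν + d ν

/-- `ω i j = [g(X) g(X)ᵀ − Σ]_{i,j}`. -/
noncomputable def omE {n k ℓ : ℕ} (σ : ℝ → ℝ) (S : Matrix (Fin n) (Fin n) ℝ)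
    (A : Matrix (Fin ℓ) (UIdx n) ℝ) (b : Fin ℓ → ℝ)
    (C : Matrix (Fin (n * k)) (Fin ℓ) ℝ) (d : Fin (n * k) → ℝ)
    (i j : Fin n) : ℝ :=
  (∑ s : Fin k, Xv σ S A b C d (fidx i s) * Xv σ S A b C d (fidx j s)) - S i j

/-- The single-layer objective `φ̃(Θ) = Σ_{i,j} μ(ω_{i,j})`. -/
noncomputable def phiT {n k ℓ : ℕ} (σ μ : ℝ → ℝ) (S : Matrix (Fin n) (Fin n) ℝ)
    (A : Matrix (Fin ℓ) (UIdx n) ℝ) (b : Fin ℓ → ℝ)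
    (C : Matrix (Fin (n * k)) (Fin ℓ) ℝ) (d : Fin (n * k) → ℝ) : ℝ :=
  ∑ i : Fin n, ∑ j : Fin n, μ (omE σ S A b C d i j)


lemma cs3 (t1 t2 t3 α u β v γ w : ℝ) (hα : 0 ≤ α) (hu : 0 ≤ u) (hβ : 0 ≤ β)
    (hv : 0 ≤ v) (hγ : 0 ≤ γ) (hw : 0 ≤ w)
    (h1 : t1 ^ 2 ≤ α * u) (h2 : t2 ^ 2 ≤ β * v) (h3 : t3 ^ 2 ≤ γ * w) :
    (t1 + t2 + t3) ^ 2 ≤ (α + β + γ) * (u + v + w) := by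
  have e1 : |t1| ≤ Real.sqrt α * Real.sqrt u := by
    rw [← Real.sqrt_mul hα]; exact Real.abs_le_sqrt h1
  have e2 : |t2| ≤ Real.sqrt β * Real.sqrt v := by
    rw [← Real.sqrt_mul hβ]; exact Real.abs_le_sqrt h2
  have e3 : |t3| ≤ Real.sqrt γ * Real.sqrt w := by
    rw [← Real.sqrt_mul hγ]; exact Real.abs_le_sqrt h3
  have sα := Real.sq_sqrt hα; have su := Real.sq_sqrt hu
  have sβ := Real.sq_sqrt hβ; have sv := Real.sq_sqrt hv
  have sγ := Real.sq_sqrt hγ; have sw := Real.sq_sqrt hw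
  calc (t1 + t2 + t3) ^ 2 = |t1 + t2 + t3| ^ 2 := (sq_abs _).symm
    _ ≤ (Real.sqrt α * Real.sqrt u + Real.sqrt β * Real.sqrt v
          + Real.sqrt γ * Real.sqrt w) ^ 2 := by
        apply pow_le_pow_left₀ (abs_nonneg _)
        exact (abs_add_three _ _ _).trans (add_le_add (add_le_add e1 e2) e3)
    _ ≤ (α + β + γ) * (u + v + w) := by
        nlinarith [sq_nonneg (Real.sqrt α * Real.sqrt v - Real.sqrt β * Real.sqrt u),
          sq_nonneg (Real.sqrt α * Real.sqrt w - Real.sqrt γ * Real.sqrt u),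
          sq_nonneg (Real.sqrt β * Real.sqrt w - Real.sqrt γ * Real.sqrt v)]


theorem stmt_13 {n k ℓ : ℕ}
    (σ σ' : ℝ → ℝ) (σ'max : ℝ)
    (hσd : ∀ t, HasDerivAt σ (σ' t) t)
    (hσr : ∀ t, σ t ∈ Set.Icc (-1 : ℝ) 1)
    (hσ'b : ∀ t, |σ' t| ≤ σ'max)
    (S : Matrix (Fin n) (Fin n) ℝ) (hS : S.IsSymm)
    (A Abar : Matrix (Fin ℓ) (UIdx n) ℝ) (b bbar : Fin ℓ → ℝ)
    (C Cbar : Matrix (Fin (n * k)) (Fin ℓ) ℝ) (d dbar : Fin (n * k) → ℝ)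
    (ν : Fin (n * k)) :
    (Xv σ S A b C d ν - Xv σ S Abar bbar Cbar dbar ν) ^ 2 ≤
      ((Real.sqrt (∑ ι, C ν ι ^ 2) * σ'max *
          Real.sqrt (1 + ∑ p : UIdx n, hv S p ^ 2)) ^ 2 + (ℓ : ℝ) + 1) *
        ((∑ ι, ∑ η, (A ι η - Abar ι η) ^ 2) + (∑ ι, (b ι - bbar ι) ^ 2) +
          (∑ ι, (C ν ι - Cbar ν ι) ^ 2) + (d ν - dbar ν) ^ 2) := by
  have hmax : 0 ≤ σ'max := (abs_nonneg _).trans (hσ'b 0)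
  have hlip : ∀ x y : ℝ, |σ x - σ y| ≤ σ'max * |x - y| := by
    intro x y
    have := Convex.norm_image_sub_le_of_norm_hasDerivWithin_le
      (f := σ) (f' := σ') (s := Set.univ)
      (fun t _ => (hσd t).hasDerivWithinAt) (fun t _ => hσ'b t)
      convex_univ (Set.mem_univ y) (Set.mem_univ x)
    simpa [Real.norm_eq_abs] using this
  set f : Fin ℓ → ℝ := fun ι => σ (Zv S A b ι) with hf
  set g : Fin ℓ → ℝ := fun ι => σ (Zv S Abar bbar ι) with hg
  set H : ℝ := ∑ p : {p : Fin n × Fin n // p.1 ≤ p.2}, hv S p ^ 2 with hH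
  set EA : ℝ := ∑ ι, ∑ η, (A ι η - Abar ι η) ^ 2 with hEA
  set Eb : ℝ := ∑ ι, (b ι - bbar ι) ^ 2 with hEb
  set EC : ℝ := ∑ ι, (C ν ι - Cbar ν ι) ^ 2 with hEC
  have hHnn : 0 ≤ H := Finset.sum_nonneg fun _ _ => sq_nonneg _
  have hEAnn : 0 ≤ EA := Finset.sum_nonneg fun _ _ =>
    Finset.sum_nonneg fun _ _ => sq_nonneg _
  have hEbnn : 0 ≤ Eb := Finset.sum_nonneg fun _ _ => sq_nonneg _
  have hECnn : 0 ≤ EC := Finset.sum_nonneg fun _ _ => sq_nonneg _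
  have hCnn : (0:ℝ) ≤ ∑ ι, C ν ι ^ 2 := Finset.sum_nonneg fun _ _ => sq_nonneg _
  -- decomposition
  have hX : Xv σ S A b C d ν - Xv σ S Abar bbar Cbar dbar ν
      = (∑ ι, C ν ι * (f ι - g ι)) + (∑ ι, (C ν ι - Cbar ν ι) * g ι)
        + (d ν - dbar ν) := by
    have key : (∑ ι, C ν ι * f ι) - (∑ ι, Cbar ν ι * g ι)
        = (∑ ι, C ν ι * (f ι - g ι)) + ∑ ι, (C ν ι - Cbar ν ι) * g ι := by
      rw [← Finset.sum_add_distrib, ← Finset.sum_sub_distrib]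
      exact Finset.sum_congr rfl fun ι _ => by ring
    simp only [Xv, Matrix.mulVec, dotProduct]
    rw [show ∀ x1 x2 y1 y2 : ℝ, (x1 + x2) - (y1 + y2) = (x1 - y1) + (x2 - y2)
      from fun _ _ _ _ => by ring, key]
  -- bound on ‖Z - Z̄‖²
  have hZ : ∀ ι : Fin ℓ, (Zv S A b ι - Zv S Abar bbar ι) ^ 2
      ≤ ((∑ η, (A ι η - Abar ι η) ^ 2) + (b ι - bbar ι) ^ 2) * (H + 1) := by
    intro ι
    have hs : (∑ η, (A ι η - Abar ι η) * hv S η) ^ 2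
        ≤ (∑ η, (A ι η - Abar ι η) ^ 2) * H :=
      Finset.sum_mul_sq_le_sq_mul_sq _ _ _
    have hd : Zv S A b ι - Zv S Abar bbar ι
        = (∑ η, (A ι η - Abar ι η) * hv S η) + (b ι - bbar ι) := by
      simp only [Zv, Matrix.mulVec, dotProduct]
      rw [show ∀ x1 x2 y1 y2 : ℝ, (x1 + x2) - (y1 + y2) = (x1 - y1) + (x2 - y2)
        from fun _ _ _ _ => by ring]
      congr 1
      rw [← Finset.sum_sub_distrib]
      exact Finset.sum_congr rfl fun η _ => by ring
    have := cs3 (∑ η, (A ι η - Abar ι η) * hv S η) (b ι - bbar ι) 0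
      (∑ η, (A ι η - Abar ι η) ^ 2) H ((b ι - bbar ι) ^ 2) 1 0 0
      (Finset.sum_nonneg fun _ _ => sq_nonneg _) hHnn (sq_nonneg _)
      zero_le_one le_rfl le_rfl hs (le_of_eq (by ring)) (by norm_num)
    rw [hd]
    calc ((∑ η, (A ι η - Abar ι η) * hv S η) + (b ι - bbar ι)) ^ 2
        = ((∑ η, (A ι η - Abar ι η) * hv S η) + (b ι - bbar ι) + 0) ^ 2 := by ring
      _ ≤ ((∑ η, (A ι η - Abar ι η) ^ 2) + (b ι - bbar ι) ^ 2 + 0) * (H + 1 + 0) := this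
      _ = ((∑ η, (A ι η - Abar ι η) ^ 2) + (b ι - bbar ι) ^ 2) * (H + 1) := by ring
  -- t1 bound
  have hfg : ∀ ι : Fin ℓ, (f ι - g ι) ^ 2
      ≤ σ'max ^ 2 * (Zv S A b ι - Zv S Abar bbar ι) ^ 2 := by
    intro ι
    have h := hlip (Zv S A b ι) (Zv S Abar bbar ι)
    calc (f ι - g ι) ^ 2 = |f ι - g ι| ^ 2 := (sq_abs _).symm
      _ ≤ (σ'max * |Zv S A b ι - Zv S Abar bbar ι|) ^ 2 :=
          pow_le_pow_left₀ (abs_nonneg _) h 2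
      _ = σ'max ^ 2 * (Zv S A b ι - Zv S Abar bbar ι) ^ 2 := by
          rw [mul_pow, sq_abs]
  have h1 : (∑ ι, C ν ι * (f ι - g ι)) ^ 2
      ≤ ((∑ ι, C ν ι ^ 2) * σ'max ^ 2 * (1 + H)) * (EA + Eb) := by
    calc (∑ ι, C ν ι * (f ι - g ι)) ^ 2
        ≤ (∑ ι, C ν ι ^ 2) * ∑ ι, (f ι - g ι) ^ 2 :=
          Finset.sum_mul_sq_le_sq_mul_sq _ _ _
      _ ≤ (∑ ι, C ν ι ^ 2) * ∑ ι, σ'max ^ 2 * (Zv S A b ι - Zv S Abar bbar ι) ^ 2 := by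
          apply mul_le_mul_of_nonneg_left (Finset.sum_le_sum fun ι _ => hfg ι) hCnn
      _ ≤ (∑ ι, C ν ι ^ 2) * ∑ ι, σ'max ^ 2 *
            (((∑ η, (A ι η - Abar ι η) ^ 2) + (b ι - bbar ι) ^ 2) * (H + 1)) := by
          apply mul_le_mul_of_nonneg_left (Finset.sum_le_sum fun ι _ =>
            mul_le_mul_of_nonneg_left (hZ ι) (sq_nonneg _)) hCnn
      _ = ((∑ ι, C ν ι ^ 2) * σ'max ^ 2 * (1 + H)) * (EA + Eb) := by
          rw [hEA, hEb, ← Finset.sum_add_distrib]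
          simp only [Finset.mul_sum]
          exact Finset.sum_congr rfl fun ι _ => by ring
  -- t2 bound
  have h2 : (∑ ι, (C ν ι - Cbar ν ι) * g ι) ^ 2 ≤ (ℓ : ℝ) * EC := by
    calc (∑ ι, (C ν ι - Cbar ν ι) * g ι) ^ 2
        ≤ EC * ∑ ι, g ι ^ 2 := Finset.sum_mul_sq_le_sq_mul_sq _ _ _
      _ ≤ EC * ∑ _ι : Fin ℓ, (1:ℝ) := by
          apply mul_le_mul_of_nonneg_left (Finset.sum_le_sum fun ι _ => ?_) hECnn
          have := hσr (Zv S Abar bbar ι)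
          rw [Set.mem_Icc] at this
          nlinarith [this.1, this.2]
      _ = (ℓ : ℝ) * EC := by simp [mul_comm]
  have h3 : (d ν - dbar ν) ^ 2 ≤ 1 * ((d ν - dbar ν) ^ 2) := le_of_eq (by ring)
  have main := cs3 (∑ ι, C ν ι * (f ι - g ι)) (∑ ι, (C ν ι - Cbar ν ι) * g ι)
    (d ν - dbar ν) ((∑ ι, C ν ι ^ 2) * σ'max ^ 2 * (1 + H)) (EA + Eb)
    (ℓ : ℝ) EC 1 ((d ν - dbar ν) ^ 2)
    (mul_nonneg (mul_nonneg hCnn (sq_nonneg _)) (by linarith))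
    (add_nonneg hEAnn hEbnn) (Nat.cast_nonneg _) hECnn zero_le_one (sq_nonneg _)
    h1 h2 h3
  have hαeq : (Real.sqrt (∑ ι, C ν ι ^ 2) * σ'max * Real.sqrt (1 + H)) ^ 2
      = (∑ ι, C ν ι ^ 2) * σ'max ^ 2 * (1 + H) := by
    rw [mul_pow, mul_pow, Real.sq_sqrt hCnn, Real.sq_sqrt (by linarith)]
  rw [hX, hαeq]
  calc _ ≤ ((∑ ι, C ν ι ^ 2) * σ'max ^ 2 * (1 + H) + (ℓ:ℝ) + 1)
      * (EA + Eb + EC + (d ν - dbar ν) ^ 2) := by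
        refine main.trans (le_of_eq ?_); ring
    _ = _ := by rw [hEA, hEb, hEC]
end

section
/- Assume σ : ℝ → [−1,1] (bounded in absolute value by 1). Let Σ ∈ ℝ^{n×n} be symmetric, A ∈ ℝ^{ℓ×r}, b ∈ ℝ^ℓ, C ∈ ℝ^{nk×ℓ}, d ∈ ℝ^{nk}, and set X := C σ̃(A h(Σ)+b) + d ∈ ℝ^{nk}. For 1 ≤ i, j ≤ n and 1 ≤ ι ≤ ℓ define V_{i,j,ι} := Σ_{s=1}^k C_{(i−1)k+s, ι} X_{(j−1)k+s}. Then V_{i,j,ι}² ≤ ‖g(C_{:,ι})_{i,:}‖² · (ℓ + 1) · ( Σ_{ȷ=1}^ℓ ‖g(C_{:,ȷ})_{j,:}‖² + ‖g(d)_{j,:}‖² ). -/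
open scoped BigOperators

theorem stmt_15 {n k ℓ : ℕ}
    (σ : ℝ → ℝ) (hσr : ∀ t, σ t ∈ Set.Icc (-1 : ℝ) 1)
    (S : Matrix (Fin n) (Fin n) ℝ) (hS : S.IsSymm)
    (A : Matrix (Fin ℓ) (UIdx n) ℝ) (b : Fin ℓ → ℝ)
    (C : Matrix (Fin (n * k)) (Fin ℓ) ℝ) (d : Fin (n * k) → ℝ)
    (i j : Fin n) (ι : Fin ℓ) :
    (∑ s : Fin k, C (fidx i s) ι * Xv σ S A b C d (fidx j s)) ^ 2 ≤
      (∑ s : Fin k, C (fidx i s) ι ^ 2) * ((ℓ : ℝ) + 1) *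
        ((∑ jj : Fin ℓ, ∑ s : Fin k, C (fidx j s) jj ^ 2) +
          ∑ s : Fin k, d (fidx j s) ^ 2) := by
  set a : Fin k → Option (Fin ℓ) → ℝ := fun s t =>
    t.elim (d (fidx j s)) (fun jj => C (fidx j s) jj * σ (Zv S A b jj)) with ha
  have hX : ∀ s : Fin k, Xv σ S A b C d (fidx j s) = ∑ t : Option (Fin ℓ), a s t := by
    intro s
    rw [Fintype.sum_option]
    simp [a, Xv, Matrix.mulVec, dotProduct, add_comm]
  -- Step 1: Cauchy-Schwarz
  have h1 : (∑ s : Fin k, C (fidx i s) ι * Xv σ S A b C d (fidx j s)) ^ 2 ≤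
      (∑ s : Fin k, C (fidx i s) ι ^ 2) *
        ∑ s : Fin k, Xv σ S A b C d (fidx j s) ^ 2 :=
    Finset.sum_mul_sq_le_sq_mul_sq Finset.univ _ _
  -- Step 2: bound each X_s^2 by (ℓ+1) * ∑_t (a s t)^2
  have h2 : ∀ s : Fin k, Xv σ S A b C d (fidx j s) ^ 2 ≤
      ((ℓ : ℝ) + 1) * ∑ t : Option (Fin ℓ), a s t ^ 2 := by
    intro s
    rw [hX s]
    have := Finset.sum_mul_sq_le_sq_mul_sq Finset.univ (fun _ : Option (Fin ℓ) => (1 : ℝ)) (a s)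
    simp only [one_mul, one_pow] at this
    calc (∑ t : Option (Fin ℓ), a s t) ^ 2
        ≤ (∑ _t : Option (Fin ℓ), (1 : ℝ)) * ∑ t : Option (Fin ℓ), a s t ^ 2 := this
      _ = ((ℓ : ℝ) + 1) * ∑ t : Option (Fin ℓ), a s t ^ 2 := by
          simp [Finset.sum_const, add_comm]
  -- Step 3: ∑_t (a s t)^2 ≤ ∑_jj C^2 + d^2
  have h3 : ∀ s : Fin k, ∑ t : Option (Fin ℓ), a s t ^ 2 ≤
      (∑ jj : Fin ℓ, C (fidx j s) jj ^ 2) + d (fidx j s) ^ 2 := by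
    intro s
    rw [Fintype.sum_option]
    simp only [a, Option.elim]
    rw [add_comm]
    refine add_le_add (Finset.sum_le_sum fun jj _ => ?_) le_rfl
    rw [mul_pow]
    have hσ := hσr (Zv S A b jj)
    have : σ (Zv S A b jj) ^ 2 ≤ 1 := by
      rw [sq_le_one_iff_abs_le_one, abs_le]; exact ⟨hσ.1, hσ.2⟩
    nlinarith [sq_nonneg (C (fidx j s) jj)]
  have hC2 : (0 : ℝ) ≤ ∑ s : Fin k, C (fidx i s) ι ^ 2 :=
    Finset.sum_nonneg fun _ _ => sq_nonneg _
  have hl1 : (0 : ℝ) ≤ (ℓ : ℝ) + 1 := by positivity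
  calc (∑ s : Fin k, C (fidx i s) ι * Xv σ S A b C d (fidx j s)) ^ 2
      ≤ (∑ s : Fin k, C (fidx i s) ι ^ 2) *
        ∑ s : Fin k, Xv σ S A b C d (fidx j s) ^ 2 := h1
    _ ≤ (∑ s : Fin k, C (fidx i s) ι ^ 2) *
        ∑ s : Fin k, ((ℓ : ℝ) + 1) * (((∑ jj : Fin ℓ, C (fidx j s) jj ^ 2) + d (fidx j s) ^ 2)) := by
        apply mul_le_mul_of_nonneg_left _ hC2
        apply Finset.sum_le_sum
        intro s _
        exact le_trans (h2 s) (mul_le_mul_of_nonneg_left (h3 s) hl1)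
    _ = (∑ s : Fin k, C (fidx i s) ι ^ 2) * ((ℓ : ℝ) + 1) *
        ((∑ jj : Fin ℓ, ∑ s : Fin k, C (fidx j s) jj ^ 2) +
          ∑ s : Fin k, d (fidx j s) ^ 2) := by
        rw [← Finset.mul_sum, Finset.sum_add_distrib, Finset.sum_comm]
        ring
end
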